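/- A ring R is strongly 2-nil-clean if and only if every square element of R is the sum of an idempotent and a nilpotent that commute with each other. -/

import Mathlib

section Helpers

variable {C : Type*} [CommRing C]


private lemma isNilpotent_of_sq' {x : C} (h : IsNilpotent (x ^ 2)) : IsNilpotent x := by
  obtain ⟨n, hn⟩ := h
  exact ⟨2 * n, by rw [pow_mul, hn]⟩

private lemma liftIdem : ∀ (n : ℕ) (b : C), (b ^ 2 - b) ^ n = 0 →
    ∃ E : C, (E * E = E) ∧ IsNilpotent (b - E)
  | 0, b, h => by
    refine ⟨0, by simp, ⟨1, ?_⟩⟩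
    have h1 : (1 : C) = 0 := by simpa using h
    calc (b - 0) ^ 1 = (b - 0) ^ 1 * 1 := by ring
    _ = 0 := by rw [h1, mul_zero]
  | 1, b, h => by
    refine ⟨b, ?_, by simp⟩
    have h' : b ^ 2 - b = 0 := by simpa using h
    linear_combination h'
  | (n + 2), b, h => by
    have key : (3 * b ^ 2 - 2 * b ^ 3) ^ 2 - (3 * b ^ 2 - 2 * b ^ 3)
        = (b ^ 2 - b) ^ 2 * (4 * b ^ 2 - 4 * b - 3) := by ring
    have hcn : ((3 * b ^ 2 - 2 * b ^ 3) ^ 2 - (3 * b ^ 2 - 2 * b ^ 3)) ^ (n + 1) = 0 := by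
      rw [key, mul_pow, ← pow_mul]
      have h2 : (b ^ 2 - b) ^ (2 * (n + 1)) = 0 := by
        have he : 2 * (n + 1) = (n + 2) + n := by ring
        rw [he, pow_add, h, zero_mul]
      rw [h2, zero_mul]
    obtain ⟨E, hE, hnil⟩ := liftIdem (n + 1) _ hcn
    refine ⟨E, hE, ?_⟩
    have hbc : IsNilpotent (b - (3 * b ^ 2 - 2 * b ^ 3)) := by
      have he : b - (3 * b ^ 2 - 2 * b ^ 3) = (b ^ 2 - b) * (2 * b - 1) := by ring
      rw [he]
      exact (Commute.all _ _).isNilpotent_mul_right ⟨n + 2, h⟩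
    have he : b - E = (b - (3 * b ^ 2 - 2 * b ^ 3)) + ((3 * b ^ 2 - 2 * b ^ 3) - E) := by ring
    rw [he]
    exact (Commute.all _ _).isNilpotent_add hbc hnil

private lemma liftIdem' {b : C} (hb : IsNilpotent (b ^ 2 - b)) :
    ∃ E : C, (E * E = E) ∧ IsNilpotent (b - E) := by
  obtain ⟨n, hn⟩ := hb
  exact liftIdem n b hn

private lemma auxSplit (h6 : IsNilpotent (6 : C)) :
    ∃ p : C, (p * p = p) ∧ IsNilpotent (3 * p) ∧ IsNilpotent (2 * (1 - p)) := by
  obtain ⟨m, hm⟩ := h6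
  set k := m + 1 with hk
  have h6k : (6 : C) ^ k = 0 := by rw [hk, pow_succ, hm, zero_mul]
  have hcop : IsCoprime (2 ^ k : ℤ) (3 ^ k : ℤ) :=
    (IsCoprime.pow (by norm_num : IsCoprime (2:ℤ) 3))
  obtain ⟨s, t, hst⟩ := hcop
  set c : ℤ := s * 2 ^ k with hcdef
  have hc1 : 1 - c = t * 3 ^ k := by rw [hcdef]; linarith [hst]
  have h2k : (2:ℤ) ^ k = 2 * 2 ^ m := by rw [hk, pow_succ]; ring
  have h3k : (3:ℤ) ^ k = 3 * 3 ^ m := by rw [hk, pow_succ]; ring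
  refine ⟨(c : C), ?_, ?_, ?_⟩
  · have hz : c * c - c = (-(s * t)) * 6 ^ k := by
      have e1 : c - 1 = -(t * 3 ^ k) := by linarith [hc1]
      calc c * c - c = c * (c - 1) := by ring
      _ = (s * 2 ^ k) * (-(t * 3 ^ k)) := by rw [← e1, hcdef]
      _ = (-(s * t)) * 6 ^ k := by
          have h23 : (6:ℤ) ^ k = 2 ^ k * 3 ^ k := by rw [← mul_pow]; norm_num
          rw [h23]; ring
    have h0 : ((c * c - c : ℤ) : C) = 0 := by
      rw [hz]; push_cast; rw [h6k, mul_zero]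
    push_cast at h0
    linear_combination h0
  · refine ⟨k, ?_⟩
    have hz2 : (3 * c : ℤ) ^ k = (s * 2 ^ m) ^ k * 6 ^ k := by
      have he : (3 * c : ℤ) = s * 2 ^ m * 6 := by rw [hcdef, h2k]; ring
      rw [he, mul_pow]
    have he : ((3:C) * (c:C)) ^ k = (((3 * c : ℤ) ^ k : ℤ) : C) := by push_cast; ring
    rw [he, hz2]; push_cast; rw [h6k]; ring
  · refine ⟨k, ?_⟩
    have hz2 : (2 * (1 - c) : ℤ) ^ k = (t * 3 ^ m) ^ k * 6 ^ k := by
      have he : (2 * (1 - c) : ℤ) = t * 3 ^ m * 6 := by rw [hc1, h3k]; ring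
      rw [he, mul_pow]
    have he : ((2:C) * (1 - (c:C))) ^ k = (((2 * (1 - c) : ℤ) ^ k : ℤ) : C) := by
      push_cast; ring
    rw [he, hz2]; push_cast; rw [h6k]; ring

private lemma comp432 (E F W : C) (hE : E * E = E) (hF : F * F = F)
    (hW : IsNilpotent W) (h3 : (3 : C) = E + F + W) : IsNilpotent (432 : C) := by
  have hq : (E * F) * (E * F) = E * F := by linear_combination (F * F) * hE + E * hF
  have hVnil : IsNilpotent ((3 : C) - E - F) := by
    have he : (3 : C) - E - F = W := by rw [h3]; ring
    rw [he]; exact hW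
  have hνnil : IsNilpotent (((3 : C) - E - F) *
      (3*(E+F)^2 + 3*(E+F)*((3:C)-E-F) + ((3:C)-E-F)^2 - 1)) :=
    (Commute.all _ _).isNilpotent_mul_right hVnil
  have h24 : (24 : C) = 6*(E*F) + ((3:C)-E-F) *
      (3*(E+F)^2 + 3*(E+F)*((3:C)-E-F) + ((3:C)-E-F)^2 - 1) := by
    linear_combination (E + 1 + 3*F) * hE + (F + 1 + 3*E) * hF
  have n18 : IsNilpotent ((18 : C) * (E*F)) := by
    have h18 : (18 : C) * (E*F) = (((3 : C) - E - F) *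
        (3*(E+F)^2 + 3*(E+F)*((3:C)-E-F) + ((3:C)-E-F)^2 - 1)) * (E*F) := by
      linear_combination (E*F) * h24 + 6 * hq
    rw [h18]
    exact (Commute.all _ _).isNilpotent_mul_right hνnil
  have n24 : IsNilpotent ((24 : C) * (1 - E*F)) := by
    have h24q : (24 : C) * (1 - E*F) = (((3 : C) - E - F) *
        (3*(E+F)^2 + 3*(E+F)*((3:C)-E-F) + ((3:C)-E-F)^2 - 1)) * (1 - E*F) := by
      linear_combination (1 - E*F) * h24 - 6 * hq
    rw [h24q]
    exact (Commute.all _ _).isNilpotent_mul_right hνnil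
  have h432 : (432 : C) = 24 * ((18 : C) * (E*F)) + 18 * ((24 : C) * (1 - E*F)) := by ring
  rw [h432]
  exact (Commute.all _ _).isNilpotent_add
    ((Commute.all _ _).isNilpotent_mul_left n18)
    ((Commute.all _ _).isNilpotent_mul_left n24)

private lemma fwdCore (E F W : C) (hE : E * E = E) (hF : F * F = F)
    (hW : IsNilpotent W) (h6 : IsNilpotent (6 : C)) :
    ∃ EE NN : C, (EE * EE = EE) ∧ IsNilpotent NN ∧ (E + F + W) ^ 2 = EE + NN := by
  obtain ⟨p, hp, h3p, h2p⟩ := auxSplit h6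
  refine ⟨(E + F - 2*(E*F)) + p*(E*F),
          (2*(E+F)*W + W^2) + ((4:C) - p)*(E*F), ?_, ?_, ?_⟩
  · have hgg : (E + F - 2*(E*F)) * (E + F - 2*(E*F)) = E + F - 2*(E*F) := by
      linear_combination (1 + 4*(F*F - F)) * hE + hF
    have hhh : (E*F) * (E*F) = E*F := by linear_combination (F*F) * hE + E * hF
    have hgh : (E + F - 2*(E*F)) * (E*F) = 0 := by
      linear_combination (F - 2*(F*F)) * hE - E * hF
    linear_combination hgg + (2*p) * hgh + ((E*F)*(E*F)) * hp + p * hhh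
  · have hn : IsNilpotent (2*(E+F)*W + W^2) := by
      have he : 2*(E+F)*W + W^2 = W * (2*(E+F) + W) := by ring
      rw [he]
      exact (Commute.all _ _).isNilpotent_mul_right hW
    have h4p : IsNilpotent ((4:C) - p) := by
      have he : (4:C) - p = 2*(2*(1-p)) + 3*p := by ring
      rw [he]
      exact (Commute.all _ _).isNilpotent_add
        ((Commute.all _ _).isNilpotent_mul_left h2p) h3p
    exact (Commute.all _ _).isNilpotent_add hn
      ((Commute.all _ _).isNilpotent_mul_right h4p)
  · linear_combination hE + hF

private lemma bwdCore (A : C) (h6 : IsNilpotent (6 : C))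
    (n1 : IsNilpotent (A^4 - A^2)) (n2 : IsNilpotent ((A+1)^4 - (A+1)^2)) :
    ∃ E F W : C, (E * E = E) ∧ (F * F = F) ∧ IsNilpotent W ∧ A = E + F + W := by
  obtain ⟨p, hp, h3p, h2p⟩ := auxSplit h6
  have n3 : IsNilpotent (4*A^3 + 6*A^2 + 2*A) := by
    have he : 4*A^3 + 6*A^2 + 2*A = ((A+1)^4 - (A+1)^2) - (A^4 - A^2) := by ring
    rw [he]
    exact (Commute.all _ _).isNilpotent_sub n2 n1
  have n4 : IsNilpotent ((A^3 + 2*A) * p) := by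
    have he : (A^3 + 2*A) * p = (4*A^3 + 6*A^2 + 2*A) * p - (3*p) * (A^3 + 2*A^2) := by ring
    rw [he]
    exact (Commute.all _ _).isNilpotent_sub
      ((Commute.all _ _).isNilpotent_mul_right n3)
      ((Commute.all _ _).isNilpotent_mul_right h3p)
  have n5 : IsNilpotent ((A^3 - A) * p) := by
    have he : (A^3 - A) * p = (A^3 + 2*A) * p - (3*p) * A := by ring
    rw [he]
    exact (Commute.all _ _).isNilpotent_sub n4
      ((Commute.all _ _).isNilpotent_mul_right h3p)
  have n6 : IsNilpotent ((A^2 - A) * (1 - p)) := by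
    apply isNilpotent_of_sq'
    have he : ((A^2 - A) * (1 - p))^2
        = (A^4 - A^2)*(1-p) + (2*(1-p))*((A^2 - A^3)*(1-p)) + (A^4 - A^2)*(p*p - p) := by
      ring
    rw [he, hp, sub_self, mul_zero, add_zero]
    exact (Commute.all _ _).isNilpotent_add
      ((Commute.all _ _).isNilpotent_mul_right n1)
      ((Commute.all _ _).isNilpotent_mul_right h2p)
  -- three liftings
  have hb1 : IsNilpotent ((A*(1-p))^2 - (A*(1-p))) := by
    have he : (A*(1-p))^2 - (A*(1-p)) = (A^2 - A)*(1-p) + A^2*(p*p - p) := by ring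
    rw [he, hp, sub_self, mul_zero, add_zero]
    exact n6
  obtain ⟨e1, hE1, hv1⟩ := liftIdem' hb1
  have hb2 : IsNilpotent ((A^2*p)^2 - (A^2*p)) := by
    have he : (A^2*p)^2 - (A^2*p) = (A^4 - A^2)*p + A^4*(p*p - p) := by ring
    rw [he, hp, sub_self, mul_zero, add_zero]
    exact (Commute.all _ _).isNilpotent_mul_right n1
  obtain ⟨e2, hE2, hv2⟩ := liftIdem' hb2
  have hb3 : IsNilpotent ((2*(A^2 - A)*p)^2 - (2*(A^2 - A)*p)) := by
    have he : (2*(A^2 - A)*p)^2 - (2*(A^2 - A)*p)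
        = 4*((A^4 - A^2)*p) - 8*((A^3 - A)*p) + 2*((3*p)*(A^2 - A))
          + (4*(A^2 - A)^2)*(p*p - p) := by ring
    rw [he, hp, sub_self, mul_zero, add_zero]
    exact (Commute.all _ _).isNilpotent_add
      ((Commute.all _ _).isNilpotent_sub
        ((Commute.all _ _).isNilpotent_mul_left
          ((Commute.all _ _).isNilpotent_mul_right n1))
        ((Commute.all _ _).isNilpotent_mul_left n5))
      ((Commute.all _ _).isNilpotent_mul_left
        ((Commute.all _ _).isNilpotent_mul_right h3p))
  obtain ⟨e3, hE3, hv3⟩ := liftIdem' hb3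
  -- orthogonality
  have he1p : e1 * p = 0 := by
    have idem : (e1 * p) * (e1 * p) = e1 * p := by
      linear_combination (p*p) * hE1 + e1 * hp
    have nil : IsNilpotent (e1 * p) := by
      have he : e1 * p = -(((A*(1-p)) - e1) * p) - A*(p*p - p) := by ring
      rw [he, hp, sub_self, mul_zero, sub_zero]
      exact (((Commute.all _ _).isNilpotent_mul_right hv1)).neg
    exact IsIdempotentElem.eq_zero_of_isNilpotent idem nil
  have he2p : e2 * (1 - p) = 0 := by
    have idem : (e2 * (1-p)) * (e2 * (1-p)) = e2 * (1-p) := by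
      linear_combination ((1-p)*(1-p)) * hE2 + e2 * hp
    have nil : IsNilpotent (e2 * (1 - p)) := by
      have he : e2 * (1 - p) = -(((A^2*p) - e2) * (1-p)) - A^2*(p*p - p) := by ring
      rw [he, hp, sub_self, mul_zero, sub_zero]
      exact (((Commute.all _ _).isNilpotent_mul_right hv2)).neg
    exact IsIdempotentElem.eq_zero_of_isNilpotent idem nil
  have he12 : e1 * e2 = 0 := by
    have he : e1 * e2 = (e1 * p) * e2 + e1 * (e2 * (1 - p)) := by ring
    rw [he, he1p, he2p, zero_mul, mul_zero, add_zero]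
  refine ⟨e1 + e2, e3,
    ((A*(1-p)) - e1) + ((A^2*p) - e2) + ((2*(A^2-A)*p) - e3) - (3*p)*(A^2 - A),
    ?_, hE3, ?_, ?_⟩
  · linear_combination hE1 + hE2 + 2 * he12
  · exact (Commute.all _ _).isNilpotent_sub
      ((Commute.all _ _).isNilpotent_add ((Commute.all _ _).isNilpotent_add hv1 hv2) hv3)
      ((Commute.all _ _).isNilpotent_mul_right h3p)
  · ring


variable {R : Type*} [Ring R]

private lemma nilp_down {S : Subring R} {x : S} (h : IsNilpotent (x : R)) : IsNilpotent x := by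
  obtain ⟨n, hn⟩ := h
  exact ⟨n, Subtype.ext (by push_cast; exact hn)⟩

private lemma nilp_up {S : Subring R} {x : S} (h : IsNilpotent x) : IsNilpotent (x : R) :=
  h.map S.subtype

end Helpers

/-- A ring is strongly 2-nil-clean if every element is the sum of two
idempotents and a nilpotent that pairwise commute. -/
def Strongly2NilClean (R : Type*) [Ring R] : Prop :=
  ∀ a : R, ∃ e f w : R, IsIdempotentElem e ∧ IsIdempotentElem f ∧ IsNilpotent w ∧
    Commute e f ∧ Commute e w ∧ Commute f w ∧ a = e + f + w

theorem stmt_3 (R : Type*) [Ring R] :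
    Strongly2NilClean R ↔
      ∀ x : R, ∃ e w : R, IsIdempotentElem e ∧ IsNilpotent w ∧ Commute e w ∧
        x ^ 2 = e + w := by
  constructor
  · intro H x
    -- Step 1 : 6 is nilpotent
    have h6R : IsNilpotent (6 : R) := by
      obtain ⟨e, f, w, he, hf, hw, hef, hew, hfw, h3⟩ := H 3
      have hcomm : ∀ u ∈ ({e, f, w} : Set R), ∀ v ∈ ({e, f, w} : Set R), u * v = v * u := by
        rintro u hu v hv
        simp only [Set.mem_insert_iff, Set.mem_singleton_iff] at hu hv
        rcases hu with rfl | rfl | rfl <;> rcases hv with rfl | rfl | rfl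
        all_goals first
          | rfl
          | exact hef.eq
          | exact hef.symm.eq
          | exact hew.eq
          | exact hew.symm.eq
          | exact hfw.eq
          | exact hfw.symm.eq
      letI : CommRing (Subring.closure ({e, f, w} : Set R)) :=
        Subring.closureCommRingOfComm hcomm
      have heM : e ∈ Subring.closure ({e, f, w} : Set R) := Subring.subset_closure (by simp)
      have hfM : f ∈ Subring.closure ({e, f, w} : Set R) := Subring.subset_closure (by simp)
      have hwM : w ∈ Subring.closure ({e, f, w} : Set R) := Subring.subset_closure (by simp)
      have h432 := comp432 (⟨e, heM⟩ : Subring.closure ({e, f, w} : Set R)) ⟨f, hfM⟩ ⟨w, hwM⟩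
        (Subtype.ext (by push_cast; exact he.eq))
        (Subtype.ext (by push_cast; exact hf.eq))
        (nilp_down (by push_cast; exact hw))
        (Subtype.ext (by push_cast; exact h3))
      have h432R : IsNilpotent (432 : R) := by
        have h' := nilp_up h432
        have hc : ((432 : Subring.closure ({e, f, w} : Set R)) : R) = (432 : R) :=
          map_ofNat (Subring.subtype (Subring.closure ({e, f, w} : Set R))) 432
        rwa [hc] at h'
      obtain ⟨n, hn⟩ := h432R
      refine ⟨4 * n, ?_⟩
      have h64 : (6 : R) ^ (4 * n) = ((3 : R) * (432 : R)) ^ n := by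
        rw [pow_mul]; norm_num
      have hc3 : Commute (3 : R) (432 : R) := by
        have h3n : (3 : R) = ((3 : ℕ) : R) := by norm_num
        rw [h3n]; exact Nat.cast_commute 3 _
      rw [h64, hc3.mul_pow, hn, mul_zero]
    -- Step 2 : main construction
    obtain ⟨e, f, w, he, hf, hw, hef, hew, hfw, hx⟩ := H x
    have hcomm : ∀ u ∈ ({e, f, w} : Set R), ∀ v ∈ ({e, f, w} : Set R), u * v = v * u := by
      rintro u hu v hv
      simp only [Set.mem_insert_iff, Set.mem_singleton_iff] at hu hv
      rcases hu with rfl | rfl | rfl <;> rcases hv with rfl | rfl | rfl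
      all_goals first
        | rfl
        | exact hef.eq
        | exact hef.symm.eq
        | exact hew.eq
        | exact hew.symm.eq
        | exact hfw.eq
        | exact hfw.symm.eq
    letI : CommRing (Subring.closure ({e, f, w} : Set R)) :=
      Subring.closureCommRingOfComm hcomm
    have heM : e ∈ Subring.closure ({e, f, w} : Set R) := Subring.subset_closure (by simp)
    have hfM : f ∈ Subring.closure ({e, f, w} : Set R) := Subring.subset_closure (by simp)
    have hwM : w ∈ Subring.closure ({e, f, w} : Set R) := Subring.subset_closure (by simp)
    obtain ⟨EE, NN, hEE, hNN, hsq⟩ :=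
      fwdCore (⟨e, heM⟩ : Subring.closure ({e, f, w} : Set R)) ⟨f, hfM⟩ ⟨w, hwM⟩
        (Subtype.ext (by push_cast; exact he.eq))
        (Subtype.ext (by push_cast; exact hf.eq))
        (nilp_down (by push_cast; exact hw))
        (nilp_down (by
          have hc : ((6 : Subring.closure ({e, f, w} : Set R)) : R) = (6 : R) :=
            map_ofNat (Subring.subtype (Subring.closure ({e, f, w} : Set R))) 6
          rw [hc]; exact h6R))
    refine ⟨↑EE, ↑NN, ?_, nilp_up hNN, ?_, ?_⟩
    · show (↑EE : R) * ↑EE = ↑EE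
      exact_mod_cast congrArg Subtype.val hEE
    · show (↑EE : R) * ↑NN = ↑NN * ↑EE
      exact_mod_cast congrArg Subtype.val (mul_comm EE NN)
    · have h' := congrArg Subtype.val hsq
      push_cast at h'
      rw [hx]
      exact h'
  · intro H a
    -- Step 1 : squares minus fourth powers are nilpotent
    have B1 : ∀ x : R, IsNilpotent (x ^ 4 - x ^ 2) := by
      intro x
      obtain ⟨e, w, he, hw, hc, hx⟩ := H x
      have key : x ^ 4 - x ^ 2 = w * (e + e + w - 1) + (e * e - e) + (e * w - w * e) := by
        have h4 : x ^ 4 = x ^ 2 * x ^ 2 := by rw [← pow_add]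
        rw [h4, hx]
        noncomm_ring
      rw [key, he.eq, hc.eq]
      simp only [sub_self, add_zero]
      exact (((hc.symm.add_right hc.symm).add_right (Commute.refl w)).sub_right
        (Commute.one_right w)).isNilpotent_mul_right hw
    -- Step 2 : 6 is nilpotent
    have h6R : IsNilpotent (6 : R) := by
      have h12 : IsNilpotent (12 : R) := by
        have h2 := B1 2
        have he : (2 : R) ^ 4 - (2 : R) ^ 2 = 12 := by norm_num
        rwa [he] at h2
      obtain ⟨n, hn⟩ := h12
      refine ⟨2 * n, ?_⟩
      have h36 : (6 : R) ^ (2 * n) = ((3 : R) * (12 : R)) ^ n := by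
        rw [pow_mul]; norm_num
      have hc3 : Commute (3 : R) (12 : R) := by
        have h3n : (3 : R) = ((3 : ℕ) : R) := by norm_num
        rw [h3n]; exact Nat.cast_commute 3 _
      rw [h36, hc3.mul_pow, hn, mul_zero]
    -- Step 3 : main construction inside ℤ[a]
    have hcomm : ∀ u ∈ ({a} : Set R), ∀ v ∈ ({a} : Set R), u * v = v * u := by
      rintro u hu v hv
      simp only [Set.mem_singleton_iff] at hu hv
      subst hu; subst hv; rfl
    letI : CommRing (Subring.closure ({a} : Set R)) := Subring.closureCommRingOfComm hcomm
    have haM : a ∈ Subring.closure ({a} : Set R) := Subring.subset_closure (by simp)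
    obtain ⟨E, F, W, hE, hF, hW, hsum⟩ :=
      bwdCore (⟨a, haM⟩ : Subring.closure ({a} : Set R))
        (nilp_down (by
          have hc : ((6 : Subring.closure ({a} : Set R)) : R) = (6 : R) :=
            map_ofNat (Subring.subtype (Subring.closure ({a} : Set R))) 6
          rw [hc]; exact h6R))
        (nilp_down (by push_cast; exact B1 a))
        (nilp_down (by push_cast; exact B1 (a + 1)))
    refine ⟨↑E, ↑F, ↑W, ?_, ?_, nilp_up hW, ?_, ?_, ?_, ?_⟩
    · show (↑E : R) * ↑E = ↑E
      exact_mod_cast congrArg Subtype.val hE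
    · show (↑F : R) * ↑F = ↑F
      exact_mod_cast congrArg Subtype.val hF
    · show (↑E : R) * ↑F = ↑F * ↑E
      exact_mod_cast congrArg Subtype.val (mul_comm E F)
    · show (↑E : R) * ↑W = ↑W * ↑E
      exact_mod_cast congrArg Subtype.val (mul_comm E W)
    · show (↑F : R) * ↑W = ↑W * ↑F
      exact_mod_cast congrArg Subtype.val (mul_comm F W)
    · have h' := congrArg Subtype.val hsum
      push_cast at h'
      exact h'
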